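/- Let R be a ring such that for every pair of nonisomorphic simple right R-modules S and T one has Ext^1_R(S,T) = {0}. If M and N are isotypic right R-modules of finite length with Hom_R(M,N) = {0}, then Ext^1_R(M,N) = {0}. -/

import Mathlib

universe u

open CategoryTheory

/-- `Ext¹_A(S, T) = 0`, formulated via the `Ext` functor on the category of `A`-modules.
Right `R`-modules are treated as modules over `A = Rᵐᵒᵖ`. -/
def Ext1IsZero (A : Type u) [Ring A] (S T : Type u) [AddCommGroup S] [Module A S]
    [AddCommGroup T] [Module A T] : Prop :=
  Subsingleton (((Ext ℤ (ModuleCat.{u} A) 1).obj (Opposite.op (ModuleCat.of A S))).obj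
    (ModuleCat.of A T))

/-- The endomorphism ring of the `A`-module `M` is a division ring:
it is nontrivial and every nonzero endomorphism is invertible. -/
def EndIsDivisionRing (A : Type*) [Ring A] (M : Type*) [AddCommGroup M] [Module A M] : Prop :=
  Nontrivial (Module.End A M) ∧ ∀ f : Module.End A M, f ≠ 0 → IsUnit f

/-- The `A`-module `M` is isotypic: all of its simple subquotients are isomorphic. -/
def IsIsotypic' (A : Type*) [Ring A] (M : Type*) [AddCommGroup M] [Module A M] : Prop :=
  ∀ (p₁ p₂ : Submodule A M) (q₁ : Submodule A p₁) (q₂ : Submodule A p₂),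
    IsSimpleModule A (p₁ ⧸ q₁) → IsSimpleModule A (p₂ ⧸ q₂) →
      Nonempty ((p₁ ⧸ q₁) ≃ₗ[A] (p₂ ⧸ q₂))




/-- Every extension of `X` by `Y` splits. -/
def ExtSplit (A : Type*) [Ring A] (X Y : Type u) [AddCommGroup X] [Module A X]
    [AddCommGroup Y] [Module A Y] : Prop :=
  ∀ (E : Type u) [AddCommGroup E] [Module A E] (ι : Y →ₗ[A] E) (p : E →ₗ[A] X),
    Function.Injective ι → Function.Surjective p → Function.Exact ι p →
    ∃ s : X →ₗ[A] E, p ∘ₗ s = LinearMap.id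

variable {A : Type*} [Ring A]

section Basic

variable {X Y X' Y' : Type u} [AddCommGroup X] [Module A X] [AddCommGroup Y] [Module A Y]
  [AddCommGroup X'] [Module A X'] [AddCommGroup Y'] [Module A Y']

lemma ExtSplit.congr (eX : X ≃ₗ[A] X') (eY : Y ≃ₗ[A] Y') (h : ExtSplit A X Y) :
    ExtSplit A X' Y' := by
  intro E _ _ ι p hι hp hex
  have hex' : Function.Exact (ι ∘ₗ (eY : Y →ₗ[A] Y')) ((eX.symm : X' →ₗ[A] X) ∘ₗ p) := by
    intro e
    rw [LinearMap.comp_apply]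
    constructor
    · intro h0
      have : p e = 0 := by
        have := congrArg eX h0
        simpa using this
      obtain ⟨y, hy⟩ := (hex e).mp this
      exact ⟨eY.symm y, by simpa using hy⟩
    · rintro ⟨y, rfl⟩
      have : p ((ι ∘ₗ (eY : Y →ₗ[A] Y')) y) = 0 := (hex _).mpr ⟨eY y, rfl⟩
      rw [this, map_zero]
  obtain ⟨s, hs⟩ := h E (ι ∘ₗ (eY : Y →ₗ[A] Y')) ((eX.symm : X' →ₗ[A] X) ∘ₗ p)
    (hι.comp eY.injective) (eX.symm.surjective.comp hp) hex'
  refine ⟨s ∘ₗ (eX.symm : X' →ₗ[A] X), LinearMap.ext fun x => ?_⟩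
  have := LinearMap.congr_fun hs (eX.symm x)
  simp only [LinearMap.comp_apply, LinearMap.id_apply] at this ⊢
  refine eX.symm.injective ?_
  simpa using this

lemma extSplit_of_subsingleton_left [Subsingleton X] : ExtSplit A X Y := by
  intro E _ _ ι p hι hp hex
  exact ⟨0, LinearMap.ext fun x => Subsingleton.elim _ _⟩

lemma extSplit_of_subsingleton_right [Subsingleton Y] : ExtSplit A X Y := by
  intro E _ _ ι p hι hp hex
  have hpinj : Function.Injective p := by
    intro a b hab
    have : p (a - b) = 0 := by rw [map_sub, hab, sub_self]
    obtain ⟨y, hy⟩ := (hex _).mp this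
    rw [← sub_eq_zero, ← hy, Subsingleton.elim y 0, map_zero]
  refine ⟨(LinearEquiv.ofBijective p ⟨hpinj, hp⟩).symm, LinearMap.ext fun x => ?_⟩
  exact (LinearEquiv.ofBijective p ⟨hpinj, hp⟩).apply_symm_apply x

end Basic


variable {A : Type*} [Ring A]
variable {X Y : Type u} [AddCommGroup X] [Module A X] [AddCommGroup Y] [Module A Y]

/-- Dévissage in the first variable. -/
lemma extSplit_of_submodule_left (X' : Submodule A X) (h₁ : ExtSplit A X' Y)
    (h₂ : ExtSplit A (X ⧸ X') Y) : ExtSplit A X Y := by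
  intro E _ _ ι p hι hp hex
  -- the pulled-back extension over X'
  set E' : Submodule A E := X'.comap p with hE'
  have hιmem : ∀ y, ι y ∈ E' := fun y => by
    simp only [hE', Submodule.mem_comap, hex.apply_apply_eq_zero y, Submodule.zero_mem]
  let ι' : Y →ₗ[A] E' := ι.codRestrict E' hιmem
  let p' : E' →ₗ[A] X' := p.restrict (fun e he => he)
  have hι' : Function.Injective ι' := fun a b hab => hι (congrArg Subtype.val hab)
  have hp' : Function.Surjective p' := by
    rintro ⟨x, hx⟩
    obtain ⟨e, rfl⟩ := hp x
    exact ⟨⟨e, hx⟩, rfl⟩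
  have hex' : Function.Exact ι' p' := by
    rintro ⟨e, he⟩
    constructor
    · intro h0
      have : p e = 0 := congrArg Subtype.val h0
      obtain ⟨y, hy⟩ := (hex e).mp this
      exact ⟨y, Subtype.ext hy⟩
    · rintro ⟨y, hy⟩
      have h' : p' (ι' y) = 0 := Subtype.ext (hex.apply_apply_eq_zero y)
      rwa [hy] at h'
  obtain ⟨s₁, hs₁⟩ := h₁ E' ι' p' hι' hp' hex'
  -- the induced extension of X ⧸ X' by Y
  set s₁' : X' →ₗ[A] E := E'.subtype ∘ₗ s₁ with hs₁'def
  have hps₁' : ∀ x' : X', p (s₁' x') = (x' : X) := by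
    intro x'
    have := LinearMap.congr_fun hs₁ x'
    exact congrArg Subtype.val this
  set N : Submodule A E := LinearMap.range s₁' with hN
  set q : E →ₗ[A] (E ⧸ N) := N.mkQ with hq
  set ιb : Y →ₗ[A] (E ⧸ N) := q ∘ₗ ι with hιb
  have hNker : N ≤ LinearMap.ker (X'.mkQ ∘ₗ p) := by
    rintro _ ⟨x', rfl⟩
    simp only [LinearMap.mem_ker, LinearMap.comp_apply, hps₁']
    exact (Submodule.Quotient.mk_eq_zero X').mpr x'.2
  set pb : (E ⧸ N) →ₗ[A] (X ⧸ X') := N.liftQ (X'.mkQ ∘ₗ p) hNker with hpb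
  have hpbq : ∀ e : E, pb (q e) = X'.mkQ (p e) := fun e => rfl
  have hιbinj : Function.Injective ιb := by
    intro a b hab
    have h0 : ιb (a - b) = 0 := by rw [map_sub, hab, sub_self]
    have : ι (a - b) ∈ N := by
      have h1 : N.mkQ (ι (a - b)) = 0 := h0
      exact (Submodule.Quotient.mk_eq_zero N).mp h1
    obtain ⟨x', hx'⟩ := this
    have hpx : (x' : X) = 0 := by
      rw [← hps₁' x', hx', hex.apply_apply_eq_zero]
    have : x' = 0 := Subtype.ext hpx
    rw [this, map_zero] at hx'
    have : a - b = 0 := hι (by rw [← hx', map_zero])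
    exact sub_eq_zero.mp this
  have hpbsurj : Function.Surjective pb := by
    intro z
    obtain ⟨x, rfl⟩ := X'.mkQ_surjective z
    obtain ⟨e, rfl⟩ := hp x
    exact ⟨q e, hpbq e⟩
  have hexb : Function.Exact ιb pb := by
    intro z
    constructor
    · intro h0
      obtain ⟨e, rfl⟩ := N.mkQ_surjective z
      have hpe : p e ∈ X' := by
        have := h0
        rw [hpbq] at this
        exact (Submodule.Quotient.mk_eq_zero X').mp this
      set x' : X' := ⟨p e, hpe⟩ with hx'
      have he2 : p (e - s₁' x') = 0 := by
        rw [map_sub, hps₁']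
        exact sub_self _
      obtain ⟨y, hy⟩ := (hex _).mp he2
      refine ⟨y, ?_⟩
      show q (ι y) = q e
      rw [hy, map_sub]
      have hq0 : q (s₁' x') = 0 := (Submodule.Quotient.mk_eq_zero N).mpr (LinearMap.mem_range_self s₁' x')
      rw [hq0, sub_zero]
    · rintro ⟨y, rfl⟩
      show pb (q (ι y)) = 0
      rw [hpbq, hex.apply_apply_eq_zero, map_zero]
  obtain ⟨s₂, hs₂⟩ := h₂ (E ⧸ N) ιb pb hιbinj hpbsurj hexb
  have hsec : ∃ l : (X ⧸ X') →ₗ[A] (E ⧸ N), pb ∘ₗ l = LinearMap.id := ⟨s₂, hs₂⟩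
  obtain ⟨r₂, hr₂⟩ := ((hexb.split_tfae hιbinj hpbsurj).out 0 1).mp hsec
  have : ∃ r : E →ₗ[A] Y, r ∘ₗ ι = LinearMap.id := by
    refine ⟨r₂ ∘ₗ q, ?_⟩
    rw [LinearMap.comp_assoc]
    exact hr₂
  exact ((hex.split_tfae hι hp).out 1 0).mp this

/-- Dévissage in the second variable. -/
lemma extSplit_of_submodule_right (Y' : Submodule A Y) (h₁ : ExtSplit A X Y')
    (h₂ : ExtSplit A X (Y ⧸ Y')) : ExtSplit A X Y := by
  intro E _ _ ι p hι hp hex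
  set N' : Submodule A E := Y'.map ι with hN'
  set q : E →ₗ[A] (E ⧸ N') := N'.mkQ with hq
  set ιb : (Y ⧸ Y') →ₗ[A] (E ⧸ N') := Submodule.mapQ Y' N' ι (fun y hy => ⟨y, hy, rfl⟩) with hιb
  have hιbmk : ∀ y : Y, ιb (Y'.mkQ y) = q (ι y) := fun y => rfl
  have hN'ker : N' ≤ LinearMap.ker p := by
    rintro _ ⟨y', _, rfl⟩
    simp [hex.apply_apply_eq_zero]
  set pb : (E ⧸ N') →ₗ[A] X := N'.liftQ p hN'ker with hpb
  have hpbq : ∀ e : E, pb (q e) = p e := fun e => rfl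
  have hιbinj : Function.Injective ιb := by
    intro a b hab
    obtain ⟨y, rfl⟩ := Y'.mkQ_surjective a
    obtain ⟨z, rfl⟩ := Y'.mkQ_surjective b
    have h0 : ιb (Y'.mkQ (y - z)) = 0 := by
      rw [map_sub, map_sub, hab, sub_self]
    rw [hιbmk] at h0
    have hmem : ι (y - z) ∈ N' := (Submodule.Quotient.mk_eq_zero N').mp h0
    obtain ⟨y₁, hy₁, hy₂⟩ := hmem
    have heq : y - z = y₁ := hι hy₂.symm
    rw [← sub_eq_zero, ← map_sub]
    exact (Submodule.Quotient.mk_eq_zero Y').mpr (heq ▸ hy₁)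
  have hpbsurj : Function.Surjective pb := fun x => by
    obtain ⟨e, rfl⟩ := hp x; exact ⟨q e, rfl⟩
  have hexb : Function.Exact ιb pb := by
    intro z
    constructor
    · intro h0
      obtain ⟨e, rfl⟩ := N'.mkQ_surjective z
      obtain ⟨y, hy⟩ := (hex e).mp h0
      exact ⟨Y'.mkQ y, by rw [hιbmk, hy]⟩
    · rintro ⟨w, rfl⟩
      obtain ⟨y, rfl⟩ := Y'.mkQ_surjective w
      rw [hιbmk, hpbq, hex.apply_apply_eq_zero]
  obtain ⟨sb, hsb⟩ := h₂ (E ⧸ N') ιb pb hιbinj hpbsurj hexb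
  -- pull back the section to a submodule F of E
  set F : Submodule A E := (LinearMap.range sb).comap q with hF
  set pF : F →ₗ[A] X := p.domRestrict F with hpF
  have hqι : ∀ y' : Y', q (ι y') = 0 := by
    intro y'
    exact (Submodule.Quotient.mk_eq_zero N').mpr ⟨y', y'.2, rfl⟩
  have hιmem : ∀ y' : Y', ι y' ∈ F := by
    intro y'
    simp only [hF, Submodule.mem_comap, hqι]
    exact ⟨0, map_zero sb⟩
  set ιF : Y' →ₗ[A] F := (ι ∘ₗ Y'.subtype).codRestrict F (fun y' => hιmem y') with hιF
  have hιFinj : Function.Injective ιF := by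
    intro a b hab
    exact Subtype.ext (hι (congrArg Subtype.val hab))
  have hpFsurj : Function.Surjective pF := by
    intro x
    obtain ⟨e, he⟩ := N'.mkQ_surjective (sb x)
    refine ⟨⟨e, by rw [hF, Submodule.mem_comap]; exact ⟨x, he.symm⟩⟩, ?_⟩
    have : pb (q e) = p e := hpbq e
    rw [show q e = sb x from he] at this
    have hx : pb (sb x) = x := LinearMap.congr_fun hsb x
    exact (this.symm.trans hx)
  have hexF : Function.Exact ιF pF := by
    rintro ⟨e, heF⟩
    constructor
    · intro h0
      have hpe : p e = 0 := h0
      obtain ⟨y, hy⟩ := (hex e).mp hpe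
      obtain ⟨x, hx⟩ := Submodule.mem_comap.mp heF
      have hx0 : x = 0 := by
        have := hpbq e
        rw [← hx] at this
        have h1 : pb (sb x) = x := LinearMap.congr_fun hsb x
        rw [h1] at this
        rw [this, hpe]
      have hqe : q e = 0 := by rw [← hx, hx0, map_zero]
      have : e ∈ N' := (Submodule.Quotient.mk_eq_zero N').mp hqe
      obtain ⟨y₁, hy₁, hy₂⟩ := this
      exact ⟨⟨y₁, hy₁⟩, Subtype.ext hy₂⟩
    · rintro ⟨y', hy'⟩
      have h' : pF (ιF y') = 0 := hex.apply_apply_eq_zero y'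
      rwa [hy'] at h'
  obtain ⟨s, hs⟩ := h₁ F ιF pF hιFinj hpFsurj hexF
  refine ⟨F.subtype ∘ₗ s, LinearMap.ext fun x => ?_⟩
  exact LinearMap.congr_fun hs x

/-- `T` is isomorphic to a subquotient of `M`. -/
def IsSubquotient (A : Type*) [Ring A] (M T : Type*) [AddCommGroup M] [Module A M]
    [AddCommGroup T] [Module A T] : Prop :=
  ∃ (p : Submodule A M) (q : Submodule A p), Nonempty (T ≃ₗ[A] (p ⧸ q))

variable {A : Type*} [Ring A]

section Subquotient

variable {M M₂ T T₁ T₂ : Type*} [AddCommGroup M] [Module A M] [AddCommGroup M₂] [Module A M₂]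
  [AddCommGroup T] [Module A T] [AddCommGroup T₁] [Module A T₁] [AddCommGroup T₂] [Module A T₂]

lemma isSubquotient_of_injective (f : M →ₗ[A] M₂) (hf : Function.Injective f)
    (h : IsSubquotient A M T) : IsSubquotient A M₂ T := by
  obtain ⟨p, q, ⟨e⟩⟩ := h
  let e₁ : p ≃ₗ[A] (p.map f) := Submodule.equivMapOfInjective f hf p
  refine ⟨p.map f, q.map (e₁ : p →ₗ[A] p.map f), ⟨e.trans (Submodule.Quotient.equiv q _ e₁ rfl)⟩⟩

lemma isSubquotient_quotient (N : Submodule A M) : IsSubquotient A M (M ⧸ N) := by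
  refine ⟨⊤, N.comap (⊤ : Submodule A M).subtype,
    ⟨(Submodule.Quotient.equiv N _ (Submodule.topEquiv (R := A) (M := M)).symm ?_).symm.symm⟩⟩
  · ext x
    simp only [Submodule.mem_map, Submodule.mem_comap]
    constructor
    · rintro ⟨n, hn, rfl⟩
      simpa using hn
    · intro hx
      exact ⟨x.1, by simpa using hx, Subtype.ext rfl⟩

lemma isSubquotient_self : IsSubquotient A M M :=
  ⟨⊤, ⊥, ⟨Submodule.topEquiv.symm.trans (Submodule.quotEquivOfEqBot ⊥ rfl).symm⟩⟩

lemma isSubquotient_submodule (N : Submodule A M) : IsSubquotient A M N :=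
  ⟨N, ⊥, ⟨(Submodule.quotEquivOfEqBot ⊥ rfl).symm⟩⟩

lemma IsIsotypic'.nonempty_equiv (hM : IsIsotypic' A M) (h₁ : IsSubquotient A M T₁)
    (h₂ : IsSubquotient A M T₂) (hs₁ : IsSimpleModule A T₁) (hs₂ : IsSimpleModule A T₂) :
    Nonempty (T₁ ≃ₗ[A] T₂) := by
  obtain ⟨p₁, q₁, ⟨e₁⟩⟩ := h₁
  obtain ⟨p₂, q₂, ⟨e₂⟩⟩ := h₂
  haveI := hs₁; haveI := hs₂
  obtain ⟨e⟩ := hM p₁ p₂ q₁ q₂ (IsSimpleModule.congr e₁.symm) (IsSimpleModule.congr e₂.symm)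
  exact ⟨(e₁.trans e).trans e₂.symm⟩

end Subquotient

section Induction
variable {A : Type u} [Ring A]

lemma extSplit_of_forall_simple_right (X : Type u) [AddCommGroup X] [Module A X]
    (N : Type u) [AddCommGroup N] [Module A N] (hfl : IsFiniteLength A N)
    (h : ∀ (T : Type u) [AddCommGroup T] [Module A T], IsSimpleModule A T →
      IsSubquotient A N T → ExtSplit A X T) :
    ExtSplit A X N := by
  induction hfl with
  | of_subsingleton => exact extSplit_of_subsingleton_right
  | @of_simple_quotient N _ _ N' _ hN' ih =>
      refine extSplit_of_submodule_right N' (ih ?_)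
        (h (N ⧸ N') inferInstance (isSubquotient_quotient N'))
      intro T _ _ hT hsub
      exact h T hT (isSubquotient_of_injective N'.subtype (Submodule.injective_subtype N') hsub)

lemma extSplit_of_forall_simple_left (Y : Type u) [AddCommGroup Y] [Module A Y]
    (M : Type u) [AddCommGroup M] [Module A M] (hfl : IsFiniteLength A M)
    (h : ∀ (T : Type u) [AddCommGroup T] [Module A T], IsSimpleModule A T →
      IsSubquotient A M T → ExtSplit A T Y) :
    ExtSplit A M Y := by
  induction hfl with
  | of_subsingleton => exact extSplit_of_subsingleton_left
  | @of_simple_quotient M _ _ M' _ hM' ih =>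
      refine extSplit_of_submodule_left M' (ih ?_)
        (h (M ⧸ M') inferInstance (isSubquotient_quotient M'))
      intro T _ _ hT hsub
      exact h T hT (isSubquotient_of_injective M'.subtype (Submodule.injective_subtype M') hsub)

-- existence of a simple quotient / simple submodule
lemma exists_simple_quotient (M : Type u) [AddCommGroup M] [Module A M]
    (hfl : IsFiniteLength A M) (hnt : Nontrivial M) :
    ∃ M' : Submodule A M, IsSimpleModule A (M ⧸ M') := by
  haveI := hnt
  cases hfl with
  | of_subsingleton => exact absurd ‹Subsingleton M› (not_subsingleton M)
  | @of_simple_quotient M _ _ M' inst h => exact ⟨M', inst⟩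

lemma exists_simple_submodule (N : Type u) [AddCommGroup N] [Module A N]
    (hfl : IsFiniteLength A N) (hnt : Nontrivial N) :
    ∃ N' : Submodule A N, IsSimpleModule A N' := by
  have hart : IsArtinian A N := (isFiniteLength_iff_isNoetherian_isArtinian.mp hfl).2
  have hbt : (⊥ : Submodule A N) ≠ ⊤ := by
    intro h
    obtain ⟨x, hx⟩ := exists_ne (0 : N)
    have : x ∈ (⊥ : Submodule A N) := h.symm ▸ Submodule.mem_top
    exact hx ((Submodule.mem_bot A).mp this)
  obtain ⟨a, ha, -⟩ := (eq_bot_or_exists_atom_le (⊤ : Submodule A N)).resolve_left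
    (fun h => hbt h.symm)
  exact ⟨a, isSimpleModule_iff_isAtom.mpr ha⟩

end Induction

section CategoryPart
variable {A : Type u} [Ring A]

lemma subsingleton_iff_isZero (M : ModuleCat.{u} ℤ) : Subsingleton M ↔ Limits.IsZero M := by
  constructor
  · intro h; exact ModuleCat.isZero_of_subsingleton M
  · intro h
    constructor
    intro a b
    have h0 : (𝟙 M : M ⟶ M) = 0 := h.eq_of_src _ _
    have ha : a = (𝟙 M : M ⟶ M) a := rfl
    have hb : b = (𝟙 M : M ⟶ M) b := rfl
    rw [ha, hb, h0]
    rfl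

lemma ext1_criterion (X Y : Type u) [AddCommGroup X] [Module A X] [AddCommGroup Y] [Module A Y]
    (P : ProjectiveResolution (ModuleCat.of A X)) :
    Ext1IsZero A X Y ↔
      ∀ f : P.complex.X 1 ⟶ ModuleCat.of A Y, P.complex.d 2 1 ≫ f = 0 →
        ∃ g : P.complex.X 0 ⟶ ModuleCat.of A Y, P.complex.d 1 0 ≫ g = f := by
  set CY := ModuleCat.of A Y
  set K := P.complex.linearYonedaObj ℤ CY with hK
  have e := P.isoExt (R := ℤ) 1 CY
  rw [Ext1IsZero]
  have esub := Equiv.subsingleton_congr ((forget (ModuleCat ℤ)).mapIso e).toEquiv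
  refine Iff.trans esub ?_
  refine Iff.trans (subsingleton_iff_isZero _) ?_
  refine Iff.trans (HomologicalComplex.exactAt_iff_isZero_homology K 1).symm ?_
  refine Iff.trans (K.exactAt_iff' 0 1 2 (by simp) (by simp)) ?_
  refine Iff.trans (ShortComplex.moduleCat_exact_iff _) ?_
  constructor
  · intro h f hf
    have hx : (K.sc' 0 1 2).g f = 0 := hf
    obtain ⟨g, hg⟩ := h f hx
    exact ⟨g, hg⟩
  · intro h x hx
    obtain ⟨g, hg⟩ := h x hx
    exact ⟨g, hg⟩

lemma ext1IsZero_iff_extSplit (X Y : Type u) [AddCommGroup X] [Module A X]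
    [AddCommGroup Y] [Module A Y] :
    Ext1IsZero A X Y ↔ ExtSplit A X Y := by
  obtain ⟨P⟩ : Nonempty (ProjectiveResolution (ModuleCat.of A X)) := HasProjectiveResolution.out
  rw [ext1_criterion X Y P]
  -- linear-map versions of the data of the resolution
  let P0 : Type u := P.complex.X 0
  let P1 : Type u := P.complex.X 1
  let P2 : Type u := P.complex.X 2
  let d₁ : P1 →ₗ[A] P0 := (P.complex.d 1 0).hom
  let d₂ : P2 →ₗ[A] P1 := (P.complex.d 2 1).hom
  let π : P0 →ₗ[A] X := (P.π.f 0).hom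
  have hπ : Function.Surjective π :=
    (ModuleCat.epi_iff_surjective (P.π.f 0)).mp inferInstance
  have hexact₀ : ∀ x : P0, π x = 0 → ∃ t, d₁ t = x := by
    have h := P.exact₀
    rw [ShortComplex.moduleCat_exact_iff] at h
    exact h
  have hexact₁ : ∀ x : P1, d₁ x = 0 → ∃ t, d₂ t = x := by
    have h := P.exact_succ 0
    rw [ShortComplex.moduleCat_exact_iff] at h
    exact h
  have hdπ : ∀ t : P1, π (d₁ t) = 0 := by
    intro t
    exact LinearMap.congr_fun (congrArg ModuleCat.Hom.hom P.complex_d_comp_π_f_zero) t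
  have hdd : ∀ s : P2, d₁ (d₂ s) = 0 := by
    intro s
    exact LinearMap.congr_fun (congrArg ModuleCat.Hom.hom (P.complex.d_comp_d 2 1 0)) s
  constructor
  · -- criterion → every extension splits
    intro crit E _ _ ι p hι hp hex
    haveI : Epi (ModuleCat.ofHom p) := (ModuleCat.epi_iff_surjective _).mpr hp
    let h₀ : (P.complex.X 0 ⟶ ModuleCat.of A E) :=
      Projective.factorThru (show P.complex.X 0 ⟶ ModuleCat.of A X from P.π.f 0) (ModuleCat.ofHom p)
    let h₀' : P0 →ₗ[A] E := h₀.hom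
    have hfact : ∀ t : P0, p (h₀' t) = π t := fun t =>
      LinearMap.congr_fun (congrArg ModuleCat.Hom.hom (Projective.factorThru_comp (show P.complex.X 0 ⟶ ModuleCat.of A X from P.π.f 0) (ModuleCat.ofHom p))) t
    have hland : ∀ t : P1, h₀' (d₁ t) ∈ LinearMap.range ι := by
      intro t
      have : p (h₀' (d₁ t)) = 0 := by rw [hfact, hdπ]
      obtain ⟨y, hy⟩ := (hex _).mp this
      exact ⟨y, hy⟩
    let eι : Y ≃ₗ[A] LinearMap.range ι := LinearEquiv.ofInjective ι hι
    let f : P1 →ₗ[A] Y :=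
      (eι.symm : LinearMap.range ι →ₗ[A] Y) ∘ₗ
        LinearMap.codRestrict (LinearMap.range ι) (h₀' ∘ₗ d₁) hland
    have hιf : ∀ t : P1, ι (f t) = h₀' (d₁ t) := by
      intro t
      have h1 : eι (f t) = ⟨h₀' (d₁ t), hland t⟩ := eι.apply_symm_apply _
      have := congrArg Subtype.val h1
      simpa [eι] using this
    let fh : P.complex.X 1 ⟶ ModuleCat.of A Y := ModuleCat.ofHom f
    have hfd : P.complex.d 2 1 ≫ fh = 0 := by
      refine ModuleCat.hom_ext (LinearMap.ext fun s => ?_)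
      show f (d₂ s) = 0
      apply hι
      rw [hιf, hdd, map_zero, map_zero]
    obtain ⟨g, hg⟩ := crit fh hfd
    let g' : P0 →ₗ[A] Y := g.hom
    have hgd : ∀ t : P1, g' (d₁ t) = f t := fun t => LinearMap.congr_fun (congrArg ModuleCat.Hom.hom hg) t
    let h : P0 →ₗ[A] E := h₀' - ι ∘ₗ g'
    have hker : ∀ x : P0, π x = 0 → h x = 0 := by
      intro x hx
      obtain ⟨t, rfl⟩ := hexact₀ x hx
      show h₀' (d₁ t) - ι (g' (d₁ t)) = 0
      rw [hgd, hιf, sub_self]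
    have hle : LinearMap.ker π ≤ LinearMap.ker h := fun x hx => hker x hx
    let e := LinearMap.quotKerEquivOfSurjective π hπ
    let s : X →ₗ[A] E := ((LinearMap.ker π).liftQ h hle) ∘ₗ (e.symm : X →ₗ[A] _)
    have hs : ∀ t : P0, s (π t) = h t := by
      intro t
      have h1 : e (Submodule.Quotient.mk t) = π t := by
        simp [e, LinearMap.quotKerEquivOfSurjective]
      have h2 : e.symm (π t) = Submodule.Quotient.mk t := by
        rw [← h1, e.symm_apply_apply]
      show ((LinearMap.ker π).liftQ h hle) (e.symm (π t)) = h t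
      rw [h2]
      rfl
    refine ⟨s, LinearMap.ext fun x => ?_⟩
    obtain ⟨t, rfl⟩ := hπ x
    show p (s (π t)) = π t
    rw [hs]
    show p (h₀' t - ι (g' t)) = π t
    rw [map_sub, hfact, hex.apply_apply_eq_zero, sub_zero]
  · -- every extension splits → criterion
    intro hsplit f hf
    let f' : P1 →ₗ[A] Y := f.hom
    have hf' : ∀ s : P2, f' (d₂ s) = 0 := fun s => LinearMap.congr_fun (congrArg ModuleCat.Hom.hom hf) s
    set W : Submodule A (Y × P0) := LinearMap.range (f'.prod (-d₁)) with hW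
    have hWmem : ∀ t : P1, (f' t, -d₁ t) ∈ W := fun t => ⟨t, rfl⟩
    set q : (Y × P0) →ₗ[A] _ := W.mkQ with hq
    let ι : Y →ₗ[A] (Y × P0) ⧸ W := q ∘ₗ LinearMap.inl A Y P0
    have hWker : W ≤ LinearMap.ker (π ∘ₗ LinearMap.snd A Y P0) := by
      rintro _ ⟨t, rfl⟩
      show π (-d₁ t) = 0
      rw [map_neg, hdπ, neg_zero]
    let p : ((Y × P0) ⧸ W) →ₗ[A] X := W.liftQ (π ∘ₗ LinearMap.snd A Y P0) hWker
    have hpq : ∀ v : Y × P0, p (q v) = π v.2 := fun v => rfl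
    have hι : Function.Injective ι := by
      intro a b hab
      have h0 : ι (a - b) = 0 := by rw [map_sub, hab, sub_self]
      have : ((a - b : Y), (0 : P0)) ∈ W := by
        have := (Submodule.Quotient.mk_eq_zero W).mp h0
        exact this
      obtain ⟨t, ht⟩ := this
      have h1 : f' t = a - b := congrArg Prod.fst ht
      have h2 : -d₁ t = 0 := congrArg Prod.snd ht
      have h3 : d₁ t = 0 := by rwa [neg_eq_zero] at h2
      obtain ⟨u, rfl⟩ := hexact₁ t h3
      rw [hf'] at h1
      exact sub_eq_zero.mp (by rw [← h1]) |>.symm ▸ (sub_eq_zero.mp h1.symm ▸ rfl)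
    have hpsurj : Function.Surjective p := by
      intro x
      obtain ⟨u, rfl⟩ := hπ x
      exact ⟨q (0, u), rfl⟩
    have hexact : Function.Exact ι p := by
      intro z
      constructor
      · intro h0
        obtain ⟨v, rfl⟩ := W.mkQ_surjective z
        have hv : π v.2 = 0 := h0
        obtain ⟨t, ht⟩ := hexact₀ v.2 hv
        refine ⟨v.1 + f' t, ?_⟩
        show q (v.1 + f' t, 0) = q v
        rw [← sub_eq_zero, ← map_sub]
        refine (Submodule.Quotient.mk_eq_zero W).mpr ?_
        have : ((v.1 + f' t, (0 : P0)) - v) = (f' t, -d₁ t) := by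
          ext
          · show v.1 + f' t - v.1 = f' t
            abel
          · show 0 - v.2 = -d₁ t
            rw [ht, zero_sub]
        rw [this]
        exact hWmem t
      · rintro ⟨y, rfl⟩
        show p (q (y, 0)) = 0
        rw [hpq, map_zero]
    obtain ⟨s, hs⟩ := hsplit ((Y × P0) ⧸ W) ι p hι hpsurj hexact
    have hsec : ∃ l : X →ₗ[A] ((Y × P0) ⧸ W), p ∘ₗ l = LinearMap.id := ⟨s, hs⟩
    obtain ⟨r, hr⟩ := ((hexact.split_tfae hι hpsurj).out 0 1).mp hsec
    let g : P0 →ₗ[A] Y := r ∘ₗ q ∘ₗ LinearMap.inr A Y P0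
    have hgd : ∀ t : P1, g (d₁ t) = f' t := by
      intro t
      have hq1 : q (0, d₁ t) = q (f' t, 0) := by
        rw [← sub_eq_zero, ← map_sub]
        refine (Submodule.Quotient.mk_eq_zero W).mpr ?_
        have : (((0 : Y), d₁ t) - (f' t, 0)) = -(f' t, -d₁ t) := by
          ext
          · show 0 - f' t = -(f' t)
            rw [zero_sub]
          · show d₁ t - 0 = -(-d₁ t)
            rw [sub_zero, neg_neg]
        rw [this]
        exact W.neg_mem (hWmem t)
      show r (q (0, d₁ t)) = f' t
      rw [hq1]
      have : r (ι (f' t)) = f' t := DFunLike.congr_fun hr (f' t)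
      exact this
    let gh : P.complex.X 0 ⟶ ModuleCat.of A Y := ModuleCat.ofHom g
    refine ⟨gh, ModuleCat.hom_ext (LinearMap.ext fun t => ?_)⟩
    show g (d₁ t) = f' t
    exact hgd t



end CategoryPart

/-- Assume `Ext¹_R(S, T) = 0` for every pair of nonisomorphic simple right
`R`-modules.  If `M` and `N` are isotypic right `R`-modules of finite length with
`Hom_R(M, N) = 0`, then `Ext¹_R(M, N) = 0`. -/
theorem ext1IsZero_of_isotypic_of_hom_eq_zero (R : Type u) [Ring R]
    (hext : ∀ (S T : Type u) [AddCommGroup S] [Module Rᵐᵒᵖ S] [AddCommGroup T] [Module Rᵐᵒᵖ T],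
      IsSimpleModule Rᵐᵒᵖ S → IsSimpleModule Rᵐᵒᵖ T → IsEmpty (S ≃ₗ[Rᵐᵒᵖ] T) →
      Ext1IsZero Rᵐᵒᵖ S T)
    (M N : Type u) [AddCommGroup M] [Module Rᵐᵒᵖ M] [AddCommGroup N] [Module Rᵐᵒᵖ N]
    (hM : IsIsotypic' Rᵐᵒᵖ M) (hN : IsIsotypic' Rᵐᵒᵖ N)
    (hMfl : IsFiniteLength Rᵐᵒᵖ M) (hNfl : IsFiniteLength Rᵐᵒᵖ N)
    (hhom : ∀ f : M →ₗ[Rᵐᵒᵖ] N, f = 0) :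
    Ext1IsZero Rᵐᵒᵖ M N := by
  rw [ext1IsZero_iff_extSplit]
  by_cases hMs : Subsingleton M
  · exact extSplit_of_subsingleton_left
  by_cases hNs : Subsingleton N
  · exact extSplit_of_subsingleton_right
  haveI hMnt : Nontrivial M := not_subsingleton_iff_nontrivial.mp hMs
  haveI hNnt : Nontrivial N := not_subsingleton_iff_nontrivial.mp hNs
  obtain ⟨M₀, hM₀⟩ := exists_simple_quotient M hMfl hMnt
  obtain ⟨N₀, hN₀⟩ := exists_simple_submodule N hNfl hNnt
  have hnoiso : IsEmpty ((M ⧸ M₀) ≃ₗ[Rᵐᵒᵖ] N₀) := by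
    constructor
    intro e
    have hφ := hhom (N₀.subtype ∘ₗ (e : (M ⧸ M₀) →ₗ[Rᵐᵒᵖ] N₀) ∘ₗ M₀.mkQ)
    haveI := hM₀
    haveI : Nontrivial (M ⧸ M₀) := IsSimpleModule.nontrivial Rᵐᵒᵖ (M ⧸ M₀)
    obtain ⟨z, hz⟩ := exists_ne (0 : M ⧸ M₀)
    obtain ⟨m, rfl⟩ := M₀.mkQ_surjective z
    have h0 : ((e (M₀.mkQ m) : N₀) : N) = 0 := DFunLike.congr_fun hφ m
    have he0 : e (M₀.mkQ m) = 0 := Subtype.ext h0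
    exact hz (by simpa using congrArg e.symm he0)
  apply extSplit_of_forall_simple_left N M hMfl
  intro S _ _ hS hsubS
  apply extSplit_of_forall_simple_right S N hNfl
  intro T _ _ hT hsubT
  rw [← ext1IsZero_iff_extSplit]
  refine hext S T hS hT ?_
  constructor
  intro e
  obtain ⟨e₁⟩ := hM.nonempty_equiv hsubS (isSubquotient_quotient M₀) hS hM₀
  obtain ⟨e₂⟩ := hN.nonempty_equiv hsubT (isSubquotient_submodule N₀) hT hN₀
  exact hnoiso.false ((e₁.symm.trans e).trans e₂)
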